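/- Let 0 < Y < 2 and λ > 0. Then ∫_0^∞ x^{Y/2 − 1} (1+x)^{−(Y+1)/2} e^{−λx} dx = 2^{Y} λ^{Y/2} (Γ(Y/2)/Γ(Y)) · ∫_0^∞ t^{Y−1} e^{−2λt − λt²} dt. (The Laplace transform ∫_0^∞ x^{Y/2−1}(1+x)^{−Y/2−1/2}e^{−λx}dx expressed through the Hermite-function integral I(Y, 2λ, λ) = ∫_0^∞ t^{Y−1}e^{−2λt−λt²}dt.) -/

import Mathlib

open MeasureTheory Real Set
open scoped ENNReal

namespace LTH


lemma lintegral_image_deriv {s : Set ℝ} {f f' : ℝ → ℝ}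
    (hs : MeasurableSet s) (hf' : ∀ x ∈ s, HasDerivWithinAt f (f' x) s x) (hf : InjOn f s)
    (g : ℝ → ℝ≥0∞) :
    ∫⁻ x in f '' s, g x = ∫⁻ x in s, ENNReal.ofReal |f' x| * g (f x) := by
  simpa only [ContinuousLinearMap.det_toSpanSingleton] using
    lintegral_image_eq_lintegral_abs_det_fderiv_mul volume hs
      (fun x hx => (hf' x hx).hasFDerivWithinAt) hf g

lemma sq_image : (fun a : ℝ => a ^ 2) '' Ioi 0 = Ioi 0 := by
  ext x
  constructor
  · rintro ⟨a, ha, rfl⟩; exact pow_pos (mem_Ioi.1 ha) 2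
  · intro hx; exact ⟨Real.sqrt x, Real.sqrt_pos.2 hx, Real.sq_sqrt hx.le⟩

lemma lintegral_sq_sub (g : ℝ → ℝ≥0∞) :
    ∫⁻ x in Ioi (0:ℝ), g x = ∫⁻ a in Ioi 0, ENNReal.ofReal (2 * a) * g (a ^ 2) := by
  conv_lhs => rw [← sq_image]
  rw [lintegral_image_deriv measurableSet_Ioi (f' := fun a => 2 * a)
      (fun a _ => by simpa using (hasDerivAt_pow 2 a).hasDerivWithinAt)
      (fun a ha b hb h => by
        simpa [Real.sqrt_sq (le_of_lt (mem_Ioi.1 ha)), Real.sqrt_sq (le_of_lt (mem_Ioi.1 hb))]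
          using congrArg Real.sqrt h) g]
  refine setLIntegral_congr_fun measurableSet_Ioi (fun a ha => ?_)
  rw [abs_of_nonneg (by linarith [mem_Ioi.1 ha] : (0:ℝ) ≤ 2 * a)]

lemma lintegral_shear (b : ℝ) (g : ℝ → ℝ≥0∞) :
    ∫⁻ x in Ioi (0:ℝ), g x = ∫⁻ u in Ioi (-b), g (u + b) := by
  have himg : (fun u : ℝ => u + b) '' Ioi (-b) = Ioi 0 := by
    rw [image_add_const_Ioi, neg_add_cancel]
  conv_lhs => rw [← himg]
  rw [lintegral_image_deriv (f := fun u => u + b) (f' := fun _ => 1) measurableSet_Ioi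
      (fun u _ => by simpa using ((hasDerivAt_id u).add_const b).hasDerivWithinAt)
      ((add_left_injective b).injOn) g]
  simp

lemma lintegral_gamma' {p c : ℝ} (hp : 0 < p) (hc : 0 < c) :
    ∫⁻ σ in Ioi (0:ℝ), ENNReal.ofReal (σ ^ (p - 1) * Real.exp (-(c * σ))) =
      ENNReal.ofReal ((1 / c) ^ p * Real.Gamma p) := by
  have h0 : IntegrableOn (fun x : ℝ => Real.exp (-x) * x ^ (p - 1)) (Ioi 0) :=
    Real.GammaIntegral_convergent hp
  have h2 : IntegrableOn (fun σ : ℝ => Real.exp (-(c * σ)) * (c * σ) ^ (p - 1)) (Ioi 0) := by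
    have := (integrableOn_Ioi_comp_mul_left_iff
      (fun x : ℝ => Real.exp (-x) * x ^ (p - 1)) 0 hc).2 (by simpa using h0)
    simpa using this
  have hint : IntegrableOn (fun σ : ℝ => σ ^ (p - 1) * Real.exp (-(c * σ))) (Ioi 0) := by
    refine IntegrableOn.congr_fun (h2.const_mul (c ^ (1 - p))) (fun σ hσ => ?_) measurableSet_Ioi
    have hσ0 : (0:ℝ) < σ := hσ
    rw [Real.mul_rpow hc.le hσ0.le]
    rw [show c ^ (1-p) * (Real.exp (-(c * σ)) * (c ^ (p-1) * σ ^ (p-1)))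
        = (c ^ (1-p) * c ^ (p-1)) * (σ ^ (p-1) * Real.exp (-(c * σ))) by ring,
      ← Real.rpow_add hc]
    norm_num
  rw [← Real.integral_rpow_mul_exp_neg_mul_Ioi hp hc,
    ← ofReal_integral_eq_lintegral_ofReal hint ?_]
  filter_upwards [ae_restrict_mem measurableSet_Ioi] with σ hσ
  have : (0:ℝ) < σ := hσ
  positivity



lemma quad_image (u : ℝ) :
    (fun b : ℝ => b ^ 2 + u * b) '' Ioi (max (-u) 0) = Ioi 0 := by
  ext t
  constructor
  · rintro ⟨b, hb, rfl⟩
    have h2 : 0 < b := lt_of_le_of_lt (le_max_right _ _) hb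
    have h1 : -u < b := lt_of_le_of_lt (le_max_left _ _) hb
    have h3 : 0 < b + u := by linarith
    have : b ^ 2 + u * b = b * (b + u) := by ring
    simp only [mem_Ioi]
    rw [this]
    positivity
  · intro ht
    have ht0 : (0:ℝ) < t := ht
    have hr0 : 0 < u ^ 2 + 4 * t := by positivity
    set r := Real.sqrt (u ^ 2 + 4 * t) with hrdef
    have hr2 : r ^ 2 = u ^ 2 + 4 * t := Real.sq_sqrt hr0.le
    have hrpos : 0 < r := Real.sqrt_pos.2 hr0
    have hru : u < r := by nlinarith
    have hru' : -u < r := by nlinarith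
    refine ⟨(-u + r) / 2, ?_, by linear_combination hr2 / 4⟩
    rw [mem_Ioi, max_lt_iff]
    constructor <;> linarith

lemma lintegral_quad_sub (u : ℝ) (g : ℝ → ℝ≥0∞) :
    ∫⁻ t in Ioi (0:ℝ), g t
      = ∫⁻ b in Ioi (max (-u) 0), ENNReal.ofReal (2 * b + u) * g (b ^ 2 + u * b) := by
  conv_lhs => rw [← quad_image u]
  rw [lintegral_image_deriv (f' := fun b => 2 * b + u) measurableSet_Ioi
      (fun b _ => by
        simpa using ((hasDerivAt_pow 2 b).fun_add ((hasDerivAt_id b).const_mul u)).hasDerivWithinAt)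
      (fun b1 h1 b2 h2 h => by
        have hb1 := max_lt_iff.1 (mem_Ioi.1 h1)
        have hb2 := max_lt_iff.1 (mem_Ioi.1 h2)
        have hz : (b1 - b2) * (b1 + b2 + u) = 0 := by linear_combination h
        rcases mul_eq_zero.1 hz with h' | h'
        · linarith
        · exfalso; linarith [hb1.1, hb1.2, hb2.1, hb2.2]) g]
  refine setLIntegral_congr_fun measurableSet_Ioi (fun b hb => ?_)
  have hb := max_lt_iff.1 (mem_Ioi.1 hb)
  rw [abs_of_nonneg (by linarith [hb.1, hb.2] : (0:ℝ) ≤ 2 * b + u)]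





lemma sq_rpow {a : ℝ} (ha : 0 ≤ a) (c : ℝ) : (a ^ 2) ^ c = a ^ (2 * c) := by
  rw [← Real.rpow_natCast a 2, ← Real.rpow_mul ha]
  norm_num

lemma step2 (Y l : ℝ) (hY0 : 0 < Y) (hl : 0 < l) :
    ∫⁻ x in Ioi (0:ℝ), ∫⁻ σ in Ioi (0:ℝ),
        ENNReal.ofReal (x ^ (Y/2 - 1) * σ ^ ((Y+1)/2 - 1) * Real.exp (-(l * (x + σ + x * σ))))
      = ∫⁻ a in Ioi (0:ℝ), ∫⁻ b in Ioi (0:ℝ),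
          ENNReal.ofReal (4 * (a ^ (Y-1) * b ^ Y) * Real.exp (-(l * (a^2 + b^2 + a^2*b^2)))) := by
  rw [lintegral_sq_sub]
  refine setLIntegral_congr_fun measurableSet_Ioi (fun a ha => ?_)
  have ha0 : (0:ℝ) < a := ha
  rw [lintegral_sq_sub fun σ => ENNReal.ofReal
      ((a^2) ^ (Y/2 - 1) * σ ^ ((Y+1)/2 - 1) * Real.exp (-(l * (a^2 + σ + a^2 * σ)))),
    ← lintegral_const_mul' _ _ ENNReal.ofReal_ne_top]
  refine setLIntegral_congr_fun measurableSet_Ioi (fun b hb => ?_)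
  have hb0 : (0:ℝ) < b := hb
  rw [← ENNReal.ofReal_mul (by positivity), ← ENNReal.ofReal_mul (by positivity)]
  congr 1
  rw [sq_rpow ha0.le, sq_rpow hb0.le]
  rw [show (2:ℝ) * a * (2 * b * (a ^ (2 * (Y/2-1)) * b ^ (2 * ((Y+1)/2-1)) *
      Real.exp (-(l * (a^2 + b^2 + a^2*b^2)))))
    = 4 * ((a ^ (Y - 2) * a) * (b ^ (Y - 1) * b)) *
      Real.exp (-(l * (a^2 + b^2 + a^2*b^2))) by ring_nf]
  rw [← Real.rpow_add_one ha0.ne' (Y-2), ← Real.rpow_add_one hb0.ne' (Y-1),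
    show Y - 2 + 1 = Y - 1 by ring, show Y - 1 + 1 = Y by ring]





lemma step1 (Y l : ℝ) (hY0 : 0 < Y) (hl : 0 < l) :
    ∫⁻ x in Ioi (0:ℝ), ∫⁻ σ in Ioi (0:ℝ),
        ENNReal.ofReal (x ^ (Y/2 - 1) * σ ^ ((Y+1)/2 - 1) * Real.exp (-(l * (x + σ + x * σ))))
      = ENNReal.ofReal (Real.Gamma ((Y+1)/2) * (1/l) ^ ((Y+1)/2)) *
        ∫⁻ x in Ioi (0:ℝ),
          ENNReal.ofReal (x ^ (Y/2 - 1) * (1 + x) ^ (-((Y+1)/2)) * Real.exp (-(l * x))) := by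
  set q : ℝ := (Y+1)/2 with hqdef
  have hq : 0 < q := by positivity
  rw [← lintegral_const_mul' _ _ ENNReal.ofReal_ne_top]
  refine setLIntegral_congr_fun measurableSet_Ioi (fun x hx => ?_)
  have hx0 : (0:ℝ) < x := hx
  have h1x : (0:ℝ) < 1 + x := by linarith
  have hc : 0 < l * (1 + x) := by positivity
  calc ∫⁻ σ in Ioi (0:ℝ), ENNReal.ofReal (x ^ (Y/2 - 1) * σ ^ (q - 1) *
          Real.exp (-(l * (x + σ + x * σ))))
      = ∫⁻ σ in Ioi (0:ℝ), ENNReal.ofReal (x ^ (Y/2 - 1) * Real.exp (-(l * x))) *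
          ENNReal.ofReal (σ ^ (q - 1) * Real.exp (-((l * (1 + x)) * σ))) := by
        refine setLIntegral_congr_fun measurableSet_Ioi (fun σ hσ => ?_)
        have hσ0 : (0:ℝ) < σ := hσ
        rw [← ENNReal.ofReal_mul (by positivity)]
        congr 1
        rw [show -(l * (x + σ + x * σ)) = -(l * x) + -((l * (1 + x)) * σ) by ring, Real.exp_add]
        ring
    _ = ENNReal.ofReal (x ^ (Y/2 - 1) * Real.exp (-(l * x))) *
          ENNReal.ofReal ((1 / (l * (1 + x))) ^ q * Real.Gamma q) := by
        rw [lintegral_const_mul' _ _ ENNReal.ofReal_ne_top, lintegral_gamma' hq hc]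
    _ = ENNReal.ofReal (Real.Gamma q * (1/l) ^ q) *
          ENNReal.ofReal (x ^ (Y/2 - 1) * (1 + x) ^ (-q) * Real.exp (-(l * x))) := by
        rw [← ENNReal.ofReal_mul (by positivity), ← ENNReal.ofReal_mul (by positivity)]
        congr 1
        have : (1 / (l * (1 + x))) ^ q = (1/l) ^ q * (1 + x) ^ (-q) := by
          rw [Real.rpow_neg h1x.le, ← Real.inv_rpow h1x.le, one_div, mul_inv,
            Real.mul_rpow (by positivity) (by positivity), one_div]
        rw [this]; ring




lemma step3 (Y l : ℝ) :
    ∫⁻ a in Ioi (0:ℝ), ∫⁻ b in Ioi (0:ℝ),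
        ENNReal.ofReal (4 * (a ^ (Y-1) * b ^ Y) * Real.exp (-(l * (a^2 + b^2 + a^2*b^2))))
  = ∫⁻ a in Ioi (0:ℝ), ∫⁻ b in Ioi (0:ℝ),
        ENNReal.ofReal (2 * ((a*b) ^ (Y-1) * (a+b)) *
          Real.exp (-(l * (a^2 + b^2 + a^2*b^2)))) := by
  have hmeas1 : Measurable (Function.uncurry fun a b : ℝ =>
      ENNReal.ofReal (2 * (a ^ (Y-1) * b ^ Y) * Real.exp (-(l * (a^2 + b^2 + a^2*b^2))))) := by
    apply Measurable.ennreal_ofReal; fun_prop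
  have hmeas2 : Measurable (Function.uncurry fun a b : ℝ =>
      ENNReal.ofReal (2 * (a ^ Y * b ^ (Y-1)) * Real.exp (-(l * (a^2 + b^2 + a^2*b^2))))) := by
    apply Measurable.ennreal_ofReal; fun_prop
  have hswap : ∫⁻ a in Ioi (0:ℝ), ∫⁻ b in Ioi (0:ℝ),
      ENNReal.ofReal (2 * (a ^ (Y-1) * b ^ Y) * Real.exp (-(l * (a^2 + b^2 + a^2*b^2))))
    = ∫⁻ a in Ioi (0:ℝ), ∫⁻ b in Ioi (0:ℝ),
      ENNReal.ofReal (2 * (a ^ Y * b ^ (Y-1)) * Real.exp (-(l * (a^2 + b^2 + a^2*b^2)))) := by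
    rw [lintegral_lintegral_swap hmeas1.aemeasurable]
    refine setLIntegral_congr_fun measurableSet_Ioi (fun a ha => ?_)
    refine setLIntegral_congr_fun measurableSet_Ioi (fun b hb => ?_)
    congr 1
    ring_nf
  have hFmeas : Measurable (fun a : ℝ => ∫⁻ b in Ioi (0:ℝ),
      ENNReal.ofReal (2 * (a ^ (Y-1) * b ^ Y) * Real.exp (-(l * (a^2 + b^2 + a^2*b^2))))) :=
    hmeas1.lintegral_prod_right'
  have hfmeas : ∀ a : ℝ, Measurable (fun b : ℝ =>
      ENNReal.ofReal (2 * (a ^ (Y-1) * b ^ Y) * Real.exp (-(l * (a^2 + b^2 + a^2*b^2))))) :=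
    fun a => hmeas1.of_uncurry_left
  have hL : ∫⁻ a in Ioi (0:ℝ), ∫⁻ b in Ioi (0:ℝ),
      ENNReal.ofReal (4 * (a ^ (Y-1) * b ^ Y) * Real.exp (-(l * (a^2 + b^2 + a^2*b^2))))
    = (∫⁻ a in Ioi (0:ℝ), ∫⁻ b in Ioi (0:ℝ),
        ENNReal.ofReal (2 * (a ^ (Y-1) * b ^ Y) * Real.exp (-(l * (a^2 + b^2 + a^2*b^2)))))
      + ∫⁻ a in Ioi (0:ℝ), ∫⁻ b in Ioi (0:ℝ),
        ENNReal.ofReal (2 * (a ^ (Y-1) * b ^ Y) * Real.exp (-(l * (a^2 + b^2 + a^2*b^2)))) := by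
    rw [← lintegral_add_left hFmeas]
    refine setLIntegral_congr_fun measurableSet_Ioi (fun a ha => ?_)
    rw [← lintegral_add_left (hfmeas a)]
    refine setLIntegral_congr_fun measurableSet_Ioi (fun b hb => ?_)
    have ha0 : (0:ℝ) < a := ha
    have hb0 : (0:ℝ) < b := hb
    rw [← ENNReal.ofReal_add (by positivity) (by positivity)]
    congr 1
    ring
  have hR : ∫⁻ a in Ioi (0:ℝ), ∫⁻ b in Ioi (0:ℝ),
      ENNReal.ofReal (2 * ((a*b) ^ (Y-1) * (a+b)) * Real.exp (-(l * (a^2 + b^2 + a^2*b^2))))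
    = (∫⁻ a in Ioi (0:ℝ), ∫⁻ b in Ioi (0:ℝ),
        ENNReal.ofReal (2 * (a ^ (Y-1) * b ^ Y) * Real.exp (-(l * (a^2 + b^2 + a^2*b^2)))))
      + ∫⁻ a in Ioi (0:ℝ), ∫⁻ b in Ioi (0:ℝ),
        ENNReal.ofReal (2 * (a ^ Y * b ^ (Y-1)) * Real.exp (-(l * (a^2 + b^2 + a^2*b^2)))) := by
    rw [← lintegral_add_left hFmeas]
    refine setLIntegral_congr_fun measurableSet_Ioi (fun a ha => ?_)
    rw [← lintegral_add_left (hfmeas a)]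
    refine setLIntegral_congr_fun measurableSet_Ioi (fun b hb => ?_)
    have ha0 : (0:ℝ) < a := ha
    have hb0 : (0:ℝ) < b := hb
    rw [← ENNReal.ofReal_add (by positivity) (by positivity)]
    congr 1
    rw [Real.mul_rpow ha0.le hb0.le,
      show b ^ Y = b ^ (Y-1) * b by rw [← Real.rpow_add_one hb0.ne' (Y-1), sub_add_cancel],
      show a ^ Y = a ^ (Y-1) * a by rw [← Real.rpow_add_one ha0.ne' (Y-1), sub_add_cancel]]
    ring
  rw [hL, hR, hswap]






lemma step4 (Y l : ℝ) (hl : 0 < l) :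
    ∫⁻ a in Ioi (0:ℝ), ∫⁻ b in Ioi (0:ℝ),
        ENNReal.ofReal (2 * ((a*b) ^ (Y-1) * (a+b)) *
          Real.exp (-(l * (a^2 + b^2 + a^2*b^2))))
      = ENNReal.ofReal (2 * Real.sqrt (π / l)) *
        ∫⁻ t in Ioi (0:ℝ), ENNReal.ofReal (t ^ (Y-1) * Real.exp (-(2*l*t) - l*t^2)) := by
  have hmeasT : Measurable (Function.uncurry fun a b : ℝ =>
      ENNReal.ofReal (2 * ((a*b) ^ (Y-1) * (a+b)) *
        Real.exp (-(l * (a^2 + b^2 + a^2*b^2))))) := by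
    apply Measurable.ennreal_ofReal; fun_prop
  have hmeasH : Measurable (Function.uncurry fun b u : ℝ =>
      if -b < u then
        ENNReal.ofReal (2 * (((u+b)*b) ^ (Y-1) * ((u+b)+b)) *
          Real.exp (-(l * ((u+b)^2 + b^2 + (u+b)^2*b^2)))) else 0) := by
    refine Measurable.ite ?_ ?_ measurable_const
    · exact measurableSet_lt (measurable_fst.neg) measurable_snd
    · apply Measurable.ennreal_ofReal; fun_prop
  calc ∫⁻ a in Ioi (0:ℝ), ∫⁻ b in Ioi (0:ℝ),
        ENNReal.ofReal (2 * ((a*b) ^ (Y-1) * (a+b)) *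
          Real.exp (-(l * (a^2 + b^2 + a^2*b^2))))
      = ∫⁻ b in Ioi (0:ℝ), ∫⁻ a in Ioi (0:ℝ),
        ENNReal.ofReal (2 * ((a*b) ^ (Y-1) * (a+b)) *
          Real.exp (-(l * (a^2 + b^2 + a^2*b^2)))) := lintegral_lintegral_swap hmeasT.aemeasurable
    _ = ∫⁻ b in Ioi (0:ℝ), ∫⁻ u : ℝ,
          (if -b < u then
            ENNReal.ofReal (2 * (((u+b)*b) ^ (Y-1) * ((u+b)+b)) *
              Real.exp (-(l * ((u+b)^2 + b^2 + (u+b)^2*b^2)))) else 0) := by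
        refine setLIntegral_congr_fun measurableSet_Ioi (fun b hb => ?_)
        rw [lintegral_shear b, ← lintegral_indicator measurableSet_Ioi]
        refine lintegral_congr fun u => ?_
        rw [indicator_apply]
        simp only [mem_Ioi]
    _ = ∫⁻ u : ℝ, ∫⁻ b in Ioi (0:ℝ),
          (if -b < u then
            ENNReal.ofReal (2 * (((u+b)*b) ^ (Y-1) * ((u+b)+b)) *
              Real.exp (-(l * ((u+b)^2 + b^2 + (u+b)^2*b^2)))) else 0) :=
        lintegral_lintegral_swap hmeasH.aemeasurable
    _ = ∫⁻ u : ℝ, ENNReal.ofReal (2 * Real.exp (-(l * u^2))) *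
          ∫⁻ t in Ioi (0:ℝ), ENNReal.ofReal (t ^ (Y-1) * Real.exp (-(2*l*t) - l*t^2)) := by
        refine lintegral_congr fun u => ?_
        calc ∫⁻ b in Ioi (0:ℝ),
              (if -b < u then
                ENNReal.ofReal (2 * (((u+b)*b) ^ (Y-1) * ((u+b)+b)) *
                  Real.exp (-(l * ((u+b)^2 + b^2 + (u+b)^2*b^2)))) else 0)
            = ∫⁻ b in Ioi (0:ℝ), (Ioi (-u)).indicator (fun b =>
                ENNReal.ofReal (2 * (((u+b)*b) ^ (Y-1) * ((u+b)+b)) *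
                  Real.exp (-(l * ((u+b)^2 + b^2 + (u+b)^2*b^2))))) b := by
              refine setLIntegral_congr_fun measurableSet_Ioi (fun b hb => ?_)
              rw [indicator_apply]
              simp only [mem_Ioi, neg_lt]
          _ = ∫⁻ b in Ioi (max (-u) 0),
                ENNReal.ofReal (2 * (((u+b)*b) ^ (Y-1) * ((u+b)+b)) *
                  Real.exp (-(l * ((u+b)^2 + b^2 + (u+b)^2*b^2)))) := by
              rw [lintegral_indicator measurableSet_Ioi, Measure.restrict_restrict measurableSet_Ioi,
                Ioi_inter_Ioi]
          _ = ∫⁻ b in Ioi (max (-u) 0), ENNReal.ofReal (2 * b + u) *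
                ENNReal.ofReal ((2 * Real.exp (-(l * u^2))) *
                  ((b^2+u*b) ^ (Y-1) * Real.exp (-(2*l*(b^2+u*b)) - l*(b^2+u*b)^2))) := by
              refine setLIntegral_congr_fun measurableSet_Ioi (fun b hb => ?_)
              have hb' := max_lt_iff.1 (mem_Ioi.1 hb)
              rw [← ENNReal.ofReal_mul (by linarith [hb'.1, hb'.2] : (0:ℝ) ≤ 2 * b + u)]
              congr 1
              rw [show ((u+b)*b : ℝ) = b^2 + u*b by ring,
                show (-(l * ((u+b)^2 + b^2 + (u+b)^2*b^2)) : ℝ)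
                  = -(l * u^2) + (-(2*l*(b^2+u*b)) - l*(b^2+u*b)^2) by ring, Real.exp_add]
              ring
          _ = ∫⁻ t in Ioi (0:ℝ), ENNReal.ofReal ((2 * Real.exp (-(l * u^2))) *
                (t ^ (Y-1) * Real.exp (-(2*l*t) - l*t^2))) :=
              (lintegral_quad_sub u fun t => ENNReal.ofReal ((2 * Real.exp (-(l * u^2))) *
                (t ^ (Y-1) * Real.exp (-(2*l*t) - l*t^2)))).symm
          _ = ENNReal.ofReal (2 * Real.exp (-(l * u^2))) *
                ∫⁻ t in Ioi (0:ℝ), ENNReal.ofReal (t ^ (Y-1) * Real.exp (-(2*l*t) - l*t^2)) := by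
              rw [← lintegral_const_mul' _ _ ENNReal.ofReal_ne_top]
              refine setLIntegral_congr_fun measurableSet_Ioi (fun t ht => ?_)
              have ht0 : (0:ℝ) < t := ht
              rw [← ENNReal.ofReal_mul (by positivity)]
    _ = ENNReal.ofReal (2 * Real.sqrt (π / l)) *
          ∫⁻ t in Ioi (0:ℝ), ENNReal.ofReal (t ^ (Y-1) * Real.exp (-(2*l*t) - l*t^2)) := by
        rw [lintegral_mul_const _ (by apply Measurable.ennreal_ofReal; fun_prop)]
        congr 1
        have hint : Integrable (fun u : ℝ => 2 * Real.exp (-(l * u^2))) := by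
          have := (integrable_exp_neg_mul_sq hl).const_mul 2
          simpa [neg_mul] using this
        rw [← ofReal_integral_eq_lintegral_ofReal hint
          (ae_of_all _ fun u => by positivity), MeasureTheory.integral_const_mul]
        congr 2
        have := integral_gaussian l
        simpa [neg_mul] using this




lemma const_id (Y l : ℝ) (hY0 : 0 < Y) (hl : 0 < l) :
    (Real.Gamma ((Y+1)/2) * (1/l) ^ ((Y+1)/2))⁻¹ * (2 * Real.sqrt (π / l))
      = 2 ^ Y * l ^ (Y/2) * (Real.Gamma (Y/2) / Real.Gamma Y) := by
  have hΓq : Real.Gamma ((Y+1)/2) ≠ 0 := (Real.Gamma_pos_of_pos (by positivity)).ne'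
  have hΓY : Real.Gamma Y ≠ 0 := (Real.Gamma_pos_of_pos hY0).ne'
  have hdup := Real.Gamma_mul_Gamma_add_half (Y/2)
  rw [show (2:ℝ) * (Y/2) = Y by ring, show Y/2 + 1/2 = (Y+1)/2 by ring] at hdup
  have h1 : Real.Gamma (Y/2) / Real.Gamma Y = 2 ^ (1-Y) * Real.sqrt π / Real.Gamma ((Y+1)/2) := by
    field_simp
    linear_combination hdup
  rw [h1]
  have hsq : Real.sqrt (π / l) = Real.sqrt π / l ^ ((1:ℝ)/2) := by
    rw [Real.sqrt_div Real.pi_nonneg l, Real.sqrt_eq_rpow l]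
  have hinv : ((1/l) ^ ((Y+1)/2) : ℝ)⁻¹ = l ^ ((Y+1)/2) := by
    rw [one_div, Real.inv_rpow hl.le, inv_inv]
  have hmul : l ^ ((Y+1)/2) = l ^ (Y/2) * l ^ ((1:ℝ)/2) := by
    rw [← Real.rpow_add hl]; congr 1; ring
  have h2 : (2:ℝ) ^ Y * 2 ^ (1-Y) = 2 := by
    rw [← Real.rpow_add two_pos]; norm_num
  rw [hsq, mul_inv, hinv]
  field_simp
  rw [hmul]
  linear_combination (-(l ^ (Y/2) * l ^ ((1:ℝ)/2))) * h2

lemma key (Y l : ℝ) (hY0 : 0 < Y) (hl : 0 < l) :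
    ∫⁻ x in Ioi (0:ℝ),
        ENNReal.ofReal (x ^ (Y/2 - 1) * (1 + x) ^ (-((Y+1)/2)) * Real.exp (-(l * x)))
      = ENNReal.ofReal (2 ^ Y * l ^ (Y/2) * (Real.Gamma (Y/2) / Real.Gamma Y)) *
        ∫⁻ t in Ioi (0:ℝ), ENNReal.ofReal (t ^ (Y-1) * Real.exp (-(2*l*t) - l*t^2)) := by
  have hchain : ENNReal.ofReal (Real.Gamma ((Y+1)/2) * (1/l) ^ ((Y+1)/2)) *
      (∫⁻ x in Ioi (0:ℝ),
        ENNReal.ofReal (x ^ (Y/2 - 1) * (1 + x) ^ (-((Y+1)/2)) * Real.exp (-(l * x))))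
    = ENNReal.ofReal (2 * Real.sqrt (π / l)) *
        ∫⁻ t in Ioi (0:ℝ), ENNReal.ofReal (t ^ (Y-1) * Real.exp (-(2*l*t) - l*t^2)) := by
    rw [← step1 Y l hY0 hl, step2 Y l hY0 hl, step3 Y l, step4 Y l hl]
  have hpos : 0 < Real.Gamma ((Y+1)/2) * (1/l) ^ ((Y+1)/2) := by positivity
  have hc1ne : ENNReal.ofReal (Real.Gamma ((Y+1)/2) * (1/l) ^ ((Y+1)/2)) ≠ 0 :=
    (ENNReal.ofReal_pos.2 hpos).ne'
  calc ∫⁻ x in Ioi (0:ℝ),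
        ENNReal.ofReal (x ^ (Y/2 - 1) * (1 + x) ^ (-((Y+1)/2)) * Real.exp (-(l * x)))
      = ((ENNReal.ofReal (Real.Gamma ((Y+1)/2) * (1/l) ^ ((Y+1)/2)))⁻¹ *
          ENNReal.ofReal (Real.Gamma ((Y+1)/2) * (1/l) ^ ((Y+1)/2))) *
          ∫⁻ x in Ioi (0:ℝ),
            ENNReal.ofReal (x ^ (Y/2 - 1) * (1 + x) ^ (-((Y+1)/2)) * Real.exp (-(l * x))) := by
        rw [ENNReal.inv_mul_cancel hc1ne ENNReal.ofReal_ne_top, one_mul]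
    _ = (ENNReal.ofReal (Real.Gamma ((Y+1)/2) * (1/l) ^ ((Y+1)/2)))⁻¹ *
          (ENNReal.ofReal (Real.Gamma ((Y+1)/2) * (1/l) ^ ((Y+1)/2)) *
          ∫⁻ x in Ioi (0:ℝ),
            ENNReal.ofReal (x ^ (Y/2 - 1) * (1 + x) ^ (-((Y+1)/2)) * Real.exp (-(l * x)))) :=
        mul_assoc _ _ _
    _ = (ENNReal.ofReal (Real.Gamma ((Y+1)/2) * (1/l) ^ ((Y+1)/2)))⁻¹ *
          (ENNReal.ofReal (2 * Real.sqrt (π / l)) *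
          ∫⁻ t in Ioi (0:ℝ), ENNReal.ofReal (t ^ (Y-1) * Real.exp (-(2*l*t) - l*t^2))) := by
        rw [hchain]
    _ = ((ENNReal.ofReal (Real.Gamma ((Y+1)/2) * (1/l) ^ ((Y+1)/2)))⁻¹ *
          ENNReal.ofReal (2 * Real.sqrt (π / l))) *
          ∫⁻ t in Ioi (0:ℝ), ENNReal.ofReal (t ^ (Y-1) * Real.exp (-(2*l*t) - l*t^2)) :=
        (mul_assoc _ _ _).symm
    _ = ENNReal.ofReal (2 ^ Y * l ^ (Y/2) * (Real.Gamma (Y/2) / Real.Gamma Y)) *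
          ∫⁻ t in Ioi (0:ℝ), ENNReal.ofReal (t ^ (Y-1) * Real.exp (-(2*l*t) - l*t^2)) := by
        rw [← ENNReal.ofReal_inv_of_pos hpos,
          ← ENNReal.ofReal_mul (by positivity), const_id Y l hY0 hl]

end LTH

/-- The Laplace transform `∫_0^∞ x^{Y/2-1}(1+x)^{-Y/2-1/2}e^{-λx}dx` expressed through the
Hermite-function integral `I(Y, 2λ, λ) = ∫_0^∞ t^{Y-1}e^{-2λt-λt²}dt`. -/
theorem laplace_transform_via_hermite (Y l : ℝ) (hY0 : 0 < Y) (hY2 : Y < 2) (hl : 0 < l) :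
    ∫ x in Ioi (0:ℝ), x ^ (Y/2 - 1) * (1 + x) ^ (-((Y+1)/2)) * Real.exp (-(l * x)) =
      2 ^ Y * l ^ (Y/2) * (Real.Gamma (Y/2) / Real.Gamma Y) *
        ∫ t in Ioi (0:ℝ), t ^ (Y - 1) * Real.exp (-(2 * l * t) - l * t^2) := by
  have h1 : 0 ≤ᵐ[volume.restrict (Ioi (0:ℝ))]
      fun x => x ^ (Y/2 - 1) * (1 + x) ^ (-((Y+1)/2)) * Real.exp (-(l * x)) := by
    filter_upwards [ae_restrict_mem measurableSet_Ioi] with x hx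
    have hx0 : (0:ℝ) < x := hx
    have h1x : (0:ℝ) < 1 + x := by linarith
    positivity
  have h2 : 0 ≤ᵐ[volume.restrict (Ioi (0:ℝ))]
      fun t => t ^ (Y - 1) * Real.exp (-(2 * l * t) - l * t^2) := by
    filter_upwards [ae_restrict_mem measurableSet_Ioi] with t ht
    have ht0 : (0:ℝ) < t := ht
    positivity
  rw [integral_eq_lintegral_of_nonneg_ae h1 (Measurable.aestronglyMeasurable (by fun_prop)),
    integral_eq_lintegral_of_nonneg_ae h2 (Measurable.aestronglyMeasurable (by fun_prop)),
    LTH.key Y l hY0 hl, ENNReal.toReal_mul, ENNReal.toReal_ofReal (by positivity)]
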